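/- Let H be a Hilbert space and A, B bounded self-adjoint positive operators on H. Suppose there exists η > 0 such that ‖(A+λI)^{-1/2}(B−A)(A+λI)^{-1/2}‖ < 1 − η for some λ > 0. Then ‖(A+λI)^{1/2}(B+λI)^{-1/2}‖ ≤ 1/√η. -/

import Mathlib

set_option maxHeartbeats 1000000


/-- If `A, B` are bounded positive self-adjoint operators on a Hilbert
space `H`, `λ > 0`, and `‖(A+λI)^{-1/2} (B−A) (A+λI)^{-1/2}‖ < 1 − η` for some `η > 0`,
then `‖(A+λI)^{1/2} (B+λI)^{-1/2}‖ ≤ 1/√η`.  The operator powers are expressed via the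
continuous functional calculus. -/
theorem stmt_0 {H : Type*} [NormedAddCommGroup H] [InnerProductSpace ℂ H] [CompleteSpace H]
    (A B : H →L[ℂ] H) (hA : 0 ≤ A) (hB : 0 ≤ B)
    (lam η : ℝ) (hlam : 0 < lam) (hη : 0 < η)
    (h : ‖cfc (fun x : ℝ => (x + lam) ^ (-(1/2 : ℝ))) A * (B - A) *
          cfc (fun x : ℝ => (x + lam) ^ (-(1/2 : ℝ))) A‖ < 1 - η) :
    ‖cfc (fun x : ℝ => Real.sqrt (x + lam)) A *
      cfc (fun x : ℝ => (x + lam) ^ (-(1/2 : ℝ))) B‖ ≤ 1 / Real.sqrt η := by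
  have hAsa : IsSelfAdjoint A := .of_nonneg hA
  have hBsa : IsSelfAdjoint B := .of_nonneg hB
  set fm : ℝ → ℝ := fun x => (x + lam) ^ (-(1/2 : ℝ)) with hfm
  set fp : ℝ → ℝ := fun x => Real.sqrt (x + lam) with hfp
  set fa : ℝ → ℝ := fun x => x + lam with hfa
  have hspecA : ∀ x ∈ spectrum ℝ A, 0 < x + lam := fun x hx =>
    add_pos_of_nonneg_of_pos (spectrum_nonneg_of_nonneg hA hx) hlam
  have hspecB : ∀ x ∈ spectrum ℝ B, 0 < x + lam := fun x hx =>
    add_pos_of_nonneg_of_pos (spectrum_nonneg_of_nonneg hB hx) hlam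
  have hcm_A : ContinuousOn fm (spectrum ℝ A) :=
    ContinuousOn.rpow_const (by fun_prop) (fun x hx => Or.inl (hspecA x hx).ne')
  have hcm_B : ContinuousOn fm (spectrum ℝ B) :=
    ContinuousOn.rpow_const (by fun_prop) (fun x hx => Or.inl (hspecB x hx).ne')
  have hcp : Continuous fp := by fun_prop
  have hca : Continuous fa := by fun_prop
  set P := cfc fp A with hP
  set S := cfc fm A with hS
  set R := cfc fm B with hR
  have hPsa : IsSelfAdjoint P := cfc_predicate fp A
  have hSsa : IsSelfAdjoint S := cfc_predicate fm A
  have hRsa : IsSelfAdjoint R := cfc_predicate fm B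
  -- pointwise identities
  have hpm : ∀ x : ℝ, 0 < x + lam → fp x * fm x = 1 := by
    intro x hx
    simp only [hfp, hfm, Real.sqrt_eq_rpow]
    rw [← Real.rpow_add hx]
    norm_num
  have hmam : ∀ x : ℝ, 0 < x + lam → fm x * fa x * fm x = 1 := by
    intro x hx
    simp only [hfm, hfa]
    nth_rewrite 2 [show x + lam = (x + lam) ^ (1 : ℝ) by rw [Real.rpow_one]]
    rw [← Real.rpow_add hx, ← Real.rpow_add hx]
    norm_num
  -- operator identities
  have hPS : P * S = 1 := by
    rw [hP, hS, ← cfc_mul fp fm A (hcp.continuousOn) hcm_A,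
      cfc_congr (g := fun _ => (1 : ℝ)) (fun x hx => hpm x (hspecA x hx))]
    exact cfc_const_one ℝ A
  have hSP : S * P = 1 := by
    rw [hP, hS, ← cfc_mul fm fp A hcm_A (hcp.continuousOn),
      cfc_congr (g := fun _ => (1 : ℝ)) (fun x hx => by
        rw [mul_comm]; exact hpm x (hspecA x hx))]
    exact cfc_const_one ℝ A
  have hPP : P * P = cfc fa A := by
    rw [hP, ← cfc_mul fp fp A (hcp.continuousOn) (hcp.continuousOn)]
    exact cfc_congr fun x hx => Real.mul_self_sqrt (hspecA x hx).le
  have hRBR : R * cfc fa B * R = 1 := by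
    rw [hR, ← cfc_mul fm fa B hcm_B (hca.continuousOn),
      ← cfc_mul (fun x => fm x * fa x) fm B (hcm_B.mul (hca.continuousOn)) hcm_B,
      cfc_congr (g := fun _ => (1 : ℝ)) (fun x hx => hmam x (hspecB x hx))]
    exact cfc_const_one ℝ B
  have hSAS : S * cfc fa A * S = 1 := by
    rw [hS, ← cfc_mul fm fa A hcm_A (hca.continuousOn),
      ← cfc_mul (fun x => fm x * fa x) fm A (hcm_A.mul (hca.continuousOn)) hcm_A,
      cfc_congr (g := fun _ => (1 : ℝ)) (fun x hx => hmam x (hspecA x hx))]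
    exact cfc_const_one ℝ A
  have hfaA : cfc fa A = A + algebraMap ℝ (H →L[ℂ] H) lam := by
    rw [show cfc fa A = cfc (fun x : ℝ => id x + lam) A from rfl,
      cfc_add_const lam (id : ℝ → ℝ) A (by fun_prop) hAsa, cfc_id ℝ A]
  have hfaB : cfc fa B = B + algebraMap ℝ (H →L[ℂ] H) lam := by
    rw [show cfc fa B = cfc (fun x : ℝ => id x + lam) B from rfl,
      cfc_add_const lam (id : ℝ → ℝ) B (by fun_prop) hBsa, cfc_id ℝ B]
  have halgnn : ∀ c : ℝ, 0 ≤ c → (0 : H →L[ℂ] H) ≤ algebraMap ℝ (H →L[ℂ] H) c := by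
    intro c hc
    have hsa : star (algebraMap ℝ (H →L[ℂ] H) (Real.sqrt c))
        = algebraMap ℝ (H →L[ℂ] H) (Real.sqrt c) := by
      rw [← algebraMap_star_comm, star_trivial]
    have e : algebraMap ℝ (H →L[ℂ] H) c
        = star (algebraMap ℝ (H →L[ℂ] H) (Real.sqrt c)) *
          algebraMap ℝ (H →L[ℂ] H) (Real.sqrt c) := by
      rw [hsa, ← map_mul, Real.mul_self_sqrt hc]
    rw [e]
    exact star_mul_self_nonneg _
  set C := S * (B - A) * S with hC
  have hCsa : IsSelfAdjoint C := (hBsa.sub hAsa).conjugate_self hSsa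
  have hCle : -(algebraMap ℝ (H →L[ℂ] H) (1 - η)) ≤ C := by
    refine le_trans ?_ hCsa.neg_algebraMap_norm_le_self
    rw [neg_le_neg_iff]
    have h0 : (0 : H →L[ℂ] H) ≤ algebraMap ℝ _ (1 - η) - algebraMap ℝ _ ‖C‖ := by
      rw [← map_sub]
      exact halgnn _ (by linarith [h])
    exact sub_nonneg.mp h0
  have hkey : algebraMap ℝ (H →L[ℂ] H) η ≤ 1 + C := by
    calc algebraMap ℝ (H →L[ℂ] H) η = 1 + -(algebraMap ℝ (H →L[ℂ] H) (1 - η)) := by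
          rw [← map_one (algebraMap ℝ (H →L[ℂ] H)), ← map_neg, ← map_add]
          norm_num
    _ ≤ 1 + C := add_le_add_right hCle 1
  have hSBS : S * cfc fa B * S = 1 + C := by
    rw [hfaB, show B + algebraMap ℝ (H →L[ℂ] H) lam = (B - A) + cfc fa A by
      rw [hfaA]; abel]
    have e : S * ((B - A) + cfc fa A) * S
        = S * (B - A) * S + S * cfc fa A * S := by noncomm_ring
    rw [e, hSAS, ← hC, add_comm]
  have hstep1 : η • cfc fa A ≤ cfc fa B := by
    have hconj := star_left_conjugate_le_conjugate hkey P
    rw [hPsa.star_eq] at hconj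
    have hL : P * algebraMap ℝ (H →L[ℂ] H) η * P = η • cfc fa A := by
      rw [Algebra.algebraMap_eq_smul_one, mul_smul_comm, mul_one, smul_mul_assoc, hPP]
    have hR' : P * (1 + C) * P = cfc fa B := by
      have e : P * (S * cfc fa B * S) * P = (P * S) * cfc fa B * (S * P) := by
        noncomm_ring
      rw [← hSBS, e, hPS, hSP, one_mul, mul_one]
    rwa [hL, hR'] at hconj
  have hstep2 : η • (R * cfc fa A * R) ≤ 1 := by
    have hconj := star_left_conjugate_le_conjugate hstep1 R
    rw [hRsa.star_eq] at hconj
    calc η • (R * cfc fa A * R) = R * (η • cfc fa A) * R := by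
          rw [mul_smul_comm, smul_mul_assoc]
    _ ≤ R * cfc fa B * R := hconj
    _ = 1 := hRBR
  set T := P * R with hT
  have hTT : star T * T = R * cfc fa A * R := by
    rw [hT, star_mul, hPsa.star_eq, hRsa.star_eq, ← hPP]
    noncomm_ring
  have hTsm : (0 : H →L[ℂ] H) ≤ η • (star T * T) := by
    have h0 := star_mul_self_nonneg (Real.sqrt η • T)
    rwa [star_smul, star_trivial, smul_mul_assoc, mul_smul_comm, smul_smul,
      Real.mul_self_sqrt hη.le] at h0
  have hnorm : η * ‖star T * T‖ ≤ 1 := by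
    have h1 : ‖η • (star T * T)‖ ≤ ‖(1 : H →L[ℂ] H)‖ :=
      CStarAlgebra.norm_le_norm_of_nonneg_of_le hTsm
        (by rw [hTT]; exact hstep2)
    have h2 : ‖(1 : H →L[ℂ] H)‖ ≤ 1 := by
      rw [ContinuousLinearMap.one_def]; exact ContinuousLinearMap.norm_id_le
    calc η * ‖star T * T‖ = ‖η • (star T * T)‖ := by
          rw [norm_smul, Real.norm_eq_abs, abs_of_nonneg hη.le]
    _ ≤ 1 := h1.trans h2
  have h2 : ‖T‖ ^ 2 ≤ η⁻¹ := by
    have h3 := mul_le_mul_of_nonneg_left hnorm (inv_nonneg.2 hη.le)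
    rw [← mul_assoc, inv_mul_cancel₀ hη.ne', one_mul, mul_one] at h3
    rw [sq, ← CStarRing.norm_star_mul_self]; exact h3
  calc ‖T‖ ≤ Real.sqrt η⁻¹ :=
        (Real.le_sqrt (norm_nonneg T) (inv_nonneg.2 hη.le)).mpr h2
  _ = 1 / Real.sqrt η := by rw [Real.sqrt_inv, one_div]
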